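/- arXiv:1702.03647 — 3 statements merged into one kernel-verified Lean document; each statement's English description precedes it below -/
import Mathlib

section
/- Let Σ = {a, b, c} and suppose w = x₁·ab·y₁·ba·z·ba·y₂·ab·x₂ and w' = x₁·ba·y₁·ab·z·ab·y₂·ba·x₂ for words x₁, y₁, z, y₂, x₂ over Σ with |y₁|_c = |y₂|_c. Then w and w' are strongly M-equivalent. -/
/-- The number of occurrences of `v` as a scattered subword (subsequence) of `w`. -/
def lcount (v w : List (Fin 3)) : ℕ := w.sublists.count v

/-- The letters of the ternary alphabet `Σ = {a, b, c}`. -/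
def A : Fin 3 := 0
def B : Fin 3 := 1
def C : Fin 3 := 2

/-- `w` and `w'` are M-equivalent with respect to the ordered alphabet `{x < y < z}`:
they have the same Parikh matrix, equivalently the same scattered-subword counts for
`x, y, z, xy, yz, xyz`. -/
def Mequiv (x y z : Fin 3) (w w' : List (Fin 3)) : Prop :=
  lcount [x] w = lcount [x] w' ∧ lcount [y] w = lcount [y] w' ∧
  lcount [z] w = lcount [z] w' ∧ lcount [x, y] w = lcount [x, y] w' ∧
  lcount [y, z] w = lcount [y, z] w' ∧ lcount [x, y, z] w = lcount [x, y, z] w'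

/-- Strong M-equivalence: M-equivalence with respect to every ordering of `{a, b, c}`. -/
def StrongME (w w' : List (Fin 3)) : Prop :=
  ∀ x y z : Fin 3, [x, y, z].Perm [A, B, C] → Mequiv x y z w w'

/-- `t`-fold repetition of the word `l`. -/
def lpow (l : List (Fin 3)) (n : ℕ) : List (Fin 3) := (List.replicate n l).flatten

section Aux

lemma count_congr (v : List (Fin 3)) (l : List (List (Fin 3))) :
    l.count v = @List.count _ instBEqOfDecidableEq v l := by
  induction l with
  | nil => rfl
  | cons a l ih => simp only [List.count_cons, ih, beq_iff_eq]

lemma lcount_perm (v : List (Fin 3)) {l₁ l₂ : List (List (Fin 3))} (p : l₁.Perm l₂) :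
    l₁.count v = l₂.count v := by
  exact p.count_eq v

lemma lcount_nil (w : List (Fin 3)) : lcount [] w = 1 := by
  induction w with
  | nil => rfl
  | cons a w ih =>
    unfold lcount at *
    rw [lcount_perm [] (List.sublists_cons_perm_append a w), List.count_append, ih]
    have : ([] : List (Fin 3)) ∉ List.map (List.cons a) w.sublists := by simp
    rw [List.count_eq_zero.2 this]

lemma lcount_cons (b : Fin 3) (v w : List (Fin 3)) (a : Fin 3) :
    lcount (b :: v) (a :: w) = lcount (b :: v) w + if b = a then lcount v w else 0 := by
  unfold lcount
  rw [lcount_perm _ (List.sublists_cons_perm_append a w), List.count_append]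
  congr 1
  by_cases hb : b = a
  · subst hb
    rw [if_pos rfl]
    exact List.count_map_of_injective _ _ List.cons_injective v
  · rw [if_neg hb]
    refine List.count_eq_zero.2 ?_
    simp only [List.mem_map]
    rintro ⟨l, -, hl⟩
    exact hb (by injection hl.symm)

lemma lcount_nil_right (v : List (Fin 3)) : lcount v [] = if v = [] then 1 else 0 := by
  cases v <;> rfl

lemma L1 (x : Fin 3) (u w : List (Fin 3)) :
    lcount [x] (u ++ w) = lcount [x] u + lcount [x] w := by
  induction u with
  | nil => simp [lcount_nil_right]
  | cons a u ih =>
    simp only [List.cons_append, lcount_cons, ih, lcount_nil]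
    by_cases hx : x = a <;> simp [hx] <;> ring

lemma L2 (x y : Fin 3) (u w : List (Fin 3)) :
    lcount [x, y] (u ++ w) = lcount [x, y] u + lcount [x] u * lcount [y] w + lcount [x, y] w := by
  induction u with
  | nil => simp [lcount_nil_right]
  | cons a u ih =>
    simp only [List.cons_append, lcount_cons, ih, lcount_nil, L1]
    by_cases hx : x = a <;> simp [hx] <;> ring

lemma L3 (x y z : Fin 3) (u w : List (Fin 3)) :
    lcount [x, y, z] (u ++ w) = lcount [x, y, z] u + lcount [x, y] u * lcount [z] w
      + lcount [x] u * lcount [y, z] w + lcount [x, y, z] w := by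
  induction u with
  | nil => simp [lcount_nil_right]
  | cons a u ih =>
    simp only [List.cons_append, lcount_cons, ih, lcount_nil, L1, L2]
    by_cases hx : x = a <;> simp [hx] <;> ring

lemma lcount_single (x : Fin 3) (w : List (Fin 3)) : lcount [x] w = w.count x := by
  induction w with
  | nil => rfl
  | cons a w ih =>
    rw [lcount_cons, ih, lcount_nil, List.count_cons]
    simp only [beq_iff_eq]
    by_cases hx : x = a
    · subst hx; simp
    · rw [if_neg hx, if_neg (fun hh => hx hh.symm)]

lemma lcount_single_two (x p q : Fin 3) :
    lcount [x] [p, q] = (if x = p then 1 else 0) + (if x = q then 1 else 0) := by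
  simp only [lcount_cons, lcount_nil, lcount_nil_right]
  by_cases h1 : x = p <;> by_cases h2 : x = q <;> simp [h1, h2, Nat.add_comm]

lemma lcount_pair_two (x y p q : Fin 3) :
    lcount [x, y] [p, q] = if x = p ∧ y = q then 1 else 0 := by
  simp only [lcount_cons, lcount_nil, lcount_nil_right]
  by_cases h1 : x = p <;> by_cases h2 : y = q <;> by_cases h3 : x = q <;>
    simp [h1, h2, h3, lcount_cons, lcount_nil_right]

lemma lcount_triple_two (x y z p q : Fin 3) : lcount [x, y, z] [p, q] = 0 := by
  simp only [lcount_cons, lcount_nil_right]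
  by_cases h1 : x = p <;> by_cases h2 : x = q <;> by_cases h3 : y = q <;>
    simp [h1, h2, h3, lcount_cons, lcount_nil_right]

set_option maxHeartbeats 2000000 in
lemma key (x y z' : Fin 3) (hx : [x, y, z'].Perm [A, B, C]) (x₁ y₁ z y₂ x₂ : List (Fin 3))
    (h' : lcount [C] y₁ = lcount [C] y₂) :
    Mequiv x y z' (x₁ ++ [A, B] ++ y₁ ++ [B, A] ++ z ++ [B, A] ++ y₂ ++ [A, B] ++ x₂)
                  (x₁ ++ [B, A] ++ y₁ ++ [A, B] ++ z ++ [A, B] ++ y₂ ++ [B, A] ++ x₂) := by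
  have h2 : lcount [(2 : Fin 3)] y₁ = lcount [(2 : Fin 3)] y₂ := h'
  have hmem : (x, y, z') ∈ [(A, B, C), (A, C, B), (B, A, C), (B, C, A), (C, A, B), (C, B, A)] := by
    have hxm := hx.mem_iff (a := x)
    have hym := hx.mem_iff (a := y)
    have hzm := hx.mem_iff (a := z')
    have hnd : [x, y, z'].Nodup := hx.nodup_iff.2 (by decide)
    simp only [List.mem_cons, List.not_mem_nil, or_false, List.nodup_cons, List.mem_cons] at hxm hym hzm hnd
    simp only [List.mem_cons, List.not_mem_nil, or_false, Prod.mk.injEq]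
    revert hnd
    rcases hxm.1 (by simp) with h | h | h <;> rcases hym.1 (by simp) with h' | h' | h' <;>
      rcases hzm.1 (by simp) with h'' | h'' | h'' <;> subst h <;> subst h' <;> subst h'' <;>
      simp [A, B, C] <;> intro <;> tauto
  fin_cases hmem <;>
    refine ⟨?_, ?_, ?_, ?_, ?_, ?_⟩ <;>
      (simp (config := { decide := true }) only [L3, L2, L1, lcount_single_two,
         lcount_pair_two, lcount_triple_two, A, B, C, mul_zero, zero_mul, mul_one, one_mul,
         add_zero, zero_add, if_true, if_false];
       try rw [h2];
       try ring)

theorem strong_two_two (x₁ y₁ z y₂ x₂ : List (Fin 3))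
    (h : y₁.count C = y₂.count C) :
    StrongME (x₁ ++ [A, B] ++ y₁ ++ [B, A] ++ z ++ [B, A] ++ y₂ ++ [A, B] ++ x₂)
             (x₁ ++ [B, A] ++ y₁ ++ [A, B] ++ z ++ [A, B] ++ y₂ ++ [B, A] ++ x₂) := by
  intro x y z' hp
  exact key x y z' hp x₁ y₁ z y₂ x₂ (by rw [lcount_single, lcount_single]; exact h)

end Aux
end

section
/- Let Σ = {a, b, c}. Suppose w = x₁·ab·y₁·ba·x₂·bc·y₂·cb·x₃·ca·y₃·ac·x₄ and w' = x₁·ba·y₁·ab·x₂·cb·y₂·bc·x₃·ac·y₃·ca·x₄ for words x₁,…,x₄, y₁, y₂, y₃ over Σ, with |y₁|_c = |y₂|_a = |y₃|_b. Then w and w' are strongly M-equivalent. -/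
def scount : List (Fin 3) → List (Fin 3) → ℕ
  | [], _ => 1
  | _ :: _, [] => 0
  | x :: v, y :: w => scount (x :: v) w + if x = y then scount v w else 0

lemma count_nil_sublists' (l : List (Fin 3)) : l.sublists'.count ([] : List (Fin 3)) = 1 := by
  induction l with
  | nil => simp [List.sublists']
  | cons a l ih =>
    rw [List.sublists'_cons, List.count_append, ih,
      List.count_eq_zero.2 (by simp)]

lemma scount_eq_sublists' (v l : List (Fin 3)) : scount v l = l.sublists'.count v := by
  induction l generalizing v with
  | nil => cases v <;> simp [scount, List.sublists']
  | cons a l ih =>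
    cases v with
    | nil =>
      rw [List.sublists'_cons, List.count_append, count_nil_sublists',
        List.count_eq_zero.2 (by simp)]
      rfl
    | cons x v =>
      rw [List.sublists'_cons, List.count_append, scount, ih]
      congr 1
      by_cases h : x = a
      · subst h
        rw [if_pos rfl, ih]
        induction l.sublists' with
        | nil => rfl
        | cons s t iht =>
          simp only [List.map_cons, List.count_cons, iht, beq_iff_eq, List.cons.injEq,
            true_and]
        
      · rw [if_neg h, Eq.comm, List.count_eq_zero.2]
        simp only [List.mem_map, not_exists]
        rintro s ⟨_, heq⟩
        exact h (by injection heq with h1 _; exact h1.symm)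

lemma count_bridge (v : List (Fin 3)) (s : List (List (Fin 3))) :
    @List.count _ List.instBEq v s = @List.count _ instBEqOfDecidableEq v s := by
  induction s with
  | nil => rfl
  | cons a t ih => simp only [List.count_cons, ih, beq_iff_eq]

lemma lcount_eq (v l : List (Fin 3)) : lcount v l = scount v l := by
  have h := (List.sublists_perm_sublists' l).count_eq v
  rw [lcount, scount_eq_sublists', count_bridge, count_bridge]
  rw [count_bridge, count_bridge] at h
  exact h

lemma s1_append (x : Fin 3) (l r : List (Fin 3)) :
    scount [x] (l ++ r) = scount [x] l + scount [x] r := by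
  induction l with
  | nil => simp [scount]
  | cons a l ih =>
    simp only [List.cons_append, scount, List.append_eq, ih]
    split_ifs <;> ring

lemma s2_append (x y : Fin 3) (l r : List (Fin 3)) :
    scount [x, y] (l ++ r) =
      scount [x, y] l + scount [x, y] r + scount [x] l * scount [y] r := by
  induction l with
  | nil => simp [scount]
  | cons a l ih =>
    simp only [List.cons_append, scount, List.append_eq, ih, s1_append]
    split_ifs <;> ring

lemma s3_append (x y z : Fin 3) (l r : List (Fin 3)) :
    scount [x, y, z] (l ++ r) =
      scount [x, y, z] l + scount [x, y, z] r + scount [x, y] l * scount [z] r +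
        scount [x] l * scount [y, z] r := by
  induction l with
  | nil => simp [scount]
  | cons a l ih =>
    simp only [List.cons_append, scount, List.append_eq, ih, s1_append, s2_append]
    split_ifs <;> ring


lemma s1_count (t : Fin 3) (l : List (Fin 3)) : scount [t] l = l.count t := by
  induction l with
  | nil => rfl
  | cons a l ih =>
    rw [List.count_cons]
    simp only [scount, ih, beq_iff_eq]
    split_ifs with h1 h2 h2 <;> first | rfl | simp_all

lemma repl2 (x y : Fin 3) (l₁ l₂ l₃ l₄ u₁ u₂ u₃ v₁ v₂ v₃ : List (Fin 3))
    (h1 : ∀ t, scount [t] u₁ = scount [t] v₁)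
    (h2 : ∀ t, scount [t] u₂ = scount [t] v₂)
    (h3 : ∀ t, scount [t] u₃ = scount [t] v₃)
    (g1 : ∀ a b, scount [a, b] u₁ = scount [a, b] v₁)
    (g2 : ∀ a b, scount [a, b] u₂ = scount [a, b] v₂)
    (g3 : ∀ a b, scount [a, b] u₃ = scount [a, b] v₃) :
    scount [x, y] (l₁ ++ (u₁ ++ (l₂ ++ (u₂ ++ (l₃ ++ (u₃ ++ l₄)))))) =
      scount [x, y] (l₁ ++ (v₁ ++ (l₂ ++ (v₂ ++ (l₃ ++ (v₃ ++ l₄)))))) := by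
  simp only [s2_append, s1_append, h1, h2, h3, g1, g2, g3]

lemma repl3 (x y z : Fin 3) (l₁ l₂ l₃ l₄ u₁ u₂ u₃ v₁ v₂ v₃ : List (Fin 3))
    (h1 : ∀ t, scount [t] u₁ = scount [t] v₁)
    (h2 : ∀ t, scount [t] u₂ = scount [t] v₂)
    (h3 : ∀ t, scount [t] u₃ = scount [t] v₃)
    (g1 : ∀ a b, scount [a, b] u₁ = scount [a, b] v₁)
    (g2 : ∀ a b, scount [a, b] u₂ = scount [a, b] v₂)
    (g3 : ∀ a b, scount [a, b] u₃ = scount [a, b] v₃) :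
    scount [x, y, z] (l₁ ++ (u₁ ++ (l₂ ++ (u₂ ++ (l₃ ++ (u₃ ++ l₄)))))) +
      (scount [x, y, z] v₁ + scount [x, y, z] v₂ + scount [x, y, z] v₃) =
    scount [x, y, z] (l₁ ++ (v₁ ++ (l₂ ++ (v₂ ++ (l₃ ++ (v₃ ++ l₄)))))) +
      (scount [x, y, z] u₁ + scount [x, y, z] u₂ + scount [x, y, z] u₃) := by
  simp only [s3_append, s2_append, s1_append, h1, h2, h3, g1, g2, g3]
  ring

lemma s1_two (t p q : Fin 3) :
    scount [t] [p, q] = (if t = p then 1 else 0) + (if t = q then 1 else 0) := by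
  simp [scount]; split_ifs <;> ring

lemma s2_two (a b p q : Fin 3) :
    scount [a, b] [p, q] = if a = p ∧ b = q then 1 else 0 := by
  simp [scount]; split_ifs with h1 h2 h3 <;> simp_all

lemma s3_two (a b c p q : Fin 3) : scount [a, b, c] [p, q] = 0 := by
  simp [scount]

lemma hb1 (p q t : Fin 3) (m : List (Fin 3)) :
    scount [t] ([p, q] ++ (m ++ [q, p])) = scount [t] ([q, p] ++ (m ++ [p, q])) := by
  simp only [s1_append, s1_two]; ring

lemma hb2 (p q a b : Fin 3) (m : List (Fin 3)) :
    scount [a, b] ([p, q] ++ (m ++ [q, p])) = scount [a, b] ([q, p] ++ (m ++ [p, q])) := by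
  simp only [s2_append, s1_append, s1_two, s2_two]; ring

lemma blocksum (x y z : Fin 3) (hperm : [x, y, z].Perm [A, B, C]) (y₁ y₂ y₃ : List (Fin 3))
    (e1 : scount [C] y₁ = scount [A] y₂) (e2 : scount [B] y₃ = scount [A] y₂) :
    scount [x, y, z] ([A, B] ++ (y₁ ++ [B, A])) + scount [x, y, z] ([B, C] ++ (y₂ ++ [C, B])) +
      scount [x, y, z] ([C, A] ++ (y₃ ++ [A, C])) =
    scount [x, y, z] ([B, A] ++ (y₁ ++ [A, B])) + scount [x, y, z] ([C, B] ++ (y₂ ++ [B, C])) +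
      scount [x, y, z] ([A, C] ++ (y₃ ++ [C, A])) := by
  have h6 : (x = A ∧ y = B ∧ z = C) ∨ (x = A ∧ y = C ∧ z = B) ∨ (x = B ∧ y = A ∧ z = C) ∨
      (x = B ∧ y = C ∧ z = A) ∨ (x = C ∧ y = A ∧ z = B) ∨ (x = C ∧ y = B ∧ z = A) := by
    fin_cases x <;> fin_cases y <;> fin_cases z <;> revert hperm <;> decide
  rcases h6 with ⟨rfl, rfl, rfl⟩ | ⟨rfl, rfl, rfl⟩ | ⟨rfl, rfl, rfl⟩ | ⟨rfl, rfl, rfl⟩ |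
    ⟨rfl, rfl, rfl⟩ | ⟨rfl, rfl, rfl⟩ <;>
  · simp only [s3_append, s2_append, s1_append, s3_two, s2_two, s1_two]
    simp only [A, B, C] at e1 e2 ⊢
    simp [e1, e2]
    try ring


theorem strong_three_three (x₁ x₂ x₃ x₄ y₁ y₂ y₃ : List (Fin 3))
    (h₁ : y₁.count C = y₂.count A) (h₂ : y₂.count A = y₃.count B) :
    StrongME
      (x₁ ++ [A, B] ++ y₁ ++ [B, A] ++ x₂ ++ [B, C] ++ y₂ ++ [C, B] ++ x₃ ++
        [C, A] ++ y₃ ++ [A, C] ++ x₄)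
      (x₁ ++ [B, A] ++ y₁ ++ [A, B] ++ x₂ ++ [C, B] ++ y₂ ++ [B, C] ++ x₃ ++
        [A, C] ++ y₃ ++ [C, A] ++ x₄) := by
  intro x y z hperm
  have e1 : scount [C] y₁ = scount [A] y₂ := by rw [s1_count, s1_count]; exact h₁
  have e2 : scount [B] y₃ = scount [A] y₂ := by rw [s1_count, s1_count]; exact h₂.symm
  have hw : x₁ ++ [A, B] ++ y₁ ++ [B, A] ++ x₂ ++ [B, C] ++ y₂ ++ [C, B] ++ x₃ ++
        [C, A] ++ y₃ ++ [A, C] ++ x₄ =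
      x₁ ++ (([A, B] ++ (y₁ ++ [B, A])) ++ (x₂ ++ (([B, C] ++ (y₂ ++ [C, B])) ++
        (x₃ ++ (([C, A] ++ (y₃ ++ [A, C])) ++ x₄))))) := by
    simp [List.append_assoc]
  have hw' : x₁ ++ [B, A] ++ y₁ ++ [A, B] ++ x₂ ++ [C, B] ++ y₂ ++ [B, C] ++ x₃ ++
        [A, C] ++ y₃ ++ [C, A] ++ x₄ =
      x₁ ++ (([B, A] ++ (y₁ ++ [A, B])) ++ (x₂ ++ (([C, B] ++ (y₂ ++ [B, C])) ++
        (x₃ ++ (([A, C] ++ (y₃ ++ [C, A])) ++ x₄))))) := by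
    simp [List.append_assoc]
  refine ⟨?_, ?_, ?_, ?_, ?_, ?_⟩
  · simp only [lcount_eq, s1_append, s1_two]; ring
  · simp only [lcount_eq, s1_append, s1_two]; ring
  · simp only [lcount_eq, s1_append, s1_two]; ring
  · rw [lcount_eq, lcount_eq, hw, hw']
    exact repl2 _ _ _ _ _ _ _ _ _ _ _ _ (fun t => hb1 A B t y₁) (fun t => hb1 B C t y₂)
      (fun t => hb1 C A t y₃) (fun a b => hb2 A B a b y₁) (fun a b => hb2 B C a b y₂)
      (fun a b => hb2 C A a b y₃)
  · rw [lcount_eq, lcount_eq, hw, hw']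
    exact repl2 _ _ _ _ _ _ _ _ _ _ _ _ (fun t => hb1 A B t y₁) (fun t => hb1 B C t y₂)
      (fun t => hb1 C A t y₃) (fun a b => hb2 A B a b y₁) (fun a b => hb2 B C a b y₂)
      (fun a b => hb2 C A a b y₃)
  · rw [lcount_eq, lcount_eq, hw, hw']
    have key := repl3 x y z x₁ x₂ x₃ x₄ ([A, B] ++ (y₁ ++ [B, A])) ([B, C] ++ (y₂ ++ [C, B]))
      ([C, A] ++ (y₃ ++ [A, C])) ([B, A] ++ (y₁ ++ [A, B])) ([C, B] ++ (y₂ ++ [B, C]))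
      ([A, C] ++ (y₃ ++ [C, A])) (fun t => hb1 A B t y₁) (fun t => hb1 B C t y₂)
      (fun t => hb1 C A t y₃) (fun a b => hb2 A B a b y₁) (fun a b => hb2 B C a b y₂)
      (fun a b => hb2 C A a b y₃)
    have bs := blocksum x y z hperm y₁ y₂ y₃ e1 e2
    omega
end

section
/- Let Σ = {a, b, c} and t ≥ 1. The words w = (abcbabacab)^t and w' = (bacababcba)^t are strongly M-equivalent. -/
/-- Recursive count of scattered subword occurrences. -/
def cnt : List (Fin 3) → List (Fin 3) → ℕ
  | [], _ => 1
  | _ :: _, [] => 0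
  | x :: v, y :: w => cnt (x :: v) w + if x = y then cnt v w else 0

lemma count_inst (v : List (Fin 3)) (L : List (List (Fin 3))) :
    L.count v = @List.count _ instBEqOfDecidableEq v L := by
  induction L with
  | nil => rfl
  | cons a L ih =>
    rw [List.count_cons, @List.count_cons _ instBEqOfDecidableEq, ih]
    congr 1
    by_cases h : v = a <;> simp [h]

lemma lcount_eq_s9 (v w : List (Fin 3)) :
    lcount v w = @List.count _ instBEqOfDecidableEq v w.sublists' := by
  rw [lcount, count_inst, @List.Perm.count_eq _ instBEqOfDecidableEq _ _ (List.sublists_perm_sublists' w)]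

lemma lcount_eq_cnt (v w : List (Fin 3)) : lcount v w = cnt v w := by
  induction w generalizing v with
  | nil => cases v <;> rfl
  | cons a w ih =>
    rw [lcount_eq_s9, List.sublists'_cons, @List.count_append _ instBEqOfDecidableEq, ← lcount_eq_s9]
    cases v with
    | nil =>
      have h0 : @List.count _ instBEqOfDecidableEq ([] : List (Fin 3))
          (List.map (List.cons a) w.sublists') = 0 := by
        refine (@List.count_eq_zero _ instBEqOfDecidableEq _ _ _).2 ?_
        simp
      rw [h0, ih]
      cases w <;> simp [cnt]
    | cons x v =>
      have hx := ih (x :: v)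
      have hv := ih v
      by_cases hxa : x = a
      · subst hxa
        have hm : @List.count _ instBEqOfDecidableEq (x :: v)
            (List.map (List.cons x) w.sublists') =
            @List.count _ instBEqOfDecidableEq v w.sublists' := by
          exact @List.count_map_of_injective _ _ instBEqOfDecidableEq _ instBEqOfDecidableEq _ w.sublists' (List.cons x) (fun s t h => by injection h) v
        rw [hm, ← lcount_eq_s9, hx, hv, cnt]
        simp
      · have hm : @List.count _ instBEqOfDecidableEq (x :: v)
            (List.map (List.cons a) w.sublists') = 0 := by
          refine (@List.count_eq_zero _ instBEqOfDecidableEq _ _ _).2 ?_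
          intro hmem
          obtain ⟨s, _, hs⟩ := List.mem_map.1 hmem
          exact hxa (by injection hs.symm)
        rw [hm, hx, cnt]
        simp [hxa]

lemma cnt1_append (x : Fin 3) (u v : List (Fin 3)) :
    cnt [x] (u ++ v) = cnt [x] u + cnt [x] v := by
  induction u with
  | nil => simp [cnt]
  | cons a u ih =>
    simp only [List.cons_append, cnt, ih, List.append_eq]
    split <;> omega

lemma cnt2_append (x y : Fin 3) (u v : List (Fin 3)) :
    cnt [x, y] (u ++ v) = cnt [x, y] u + cnt [x, y] v + cnt [x] u * cnt [y] v := by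
  induction u with
  | nil => simp [cnt]
  | cons a u ih =>
    simp only [List.cons_append, cnt, List.append_eq, ih, cnt1_append]
    split <;> ring

lemma cnt3_append (x y z : Fin 3) (u v : List (Fin 3)) :
    cnt [x, y, z] (u ++ v) = cnt [x, y, z] u + cnt [x, y, z] v +
      cnt [x] u * cnt [y, z] v + cnt [x, y] u * cnt [z] v := by
  induction u with
  | nil => simp [cnt]
  | cons a u ih =>
    simp only [List.cons_append, cnt, List.append_eq, ih, cnt1_append, cnt2_append]
    split <;> ring

lemma lpow_succ (l : List (Fin 3)) (n : ℕ) : lpow l (n + 1) = l ++ lpow l n := by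
  simp [lpow, List.replicate_succ]

lemma key_s9 (P Q : List (Fin 3)) (x y z : Fin 3)
    (hx : cnt [x] P = cnt [x] Q) (hy : cnt [y] P = cnt [y] Q)
    (hz : cnt [z] P = cnt [z] Q)
    (hxy : cnt [x, y] P = cnt [x, y] Q) (hyz : cnt [y, z] P = cnt [y, z] Q)
    (hxyz : cnt [x, y, z] P = cnt [x, y, z] Q) (t : ℕ) :
    cnt [x] (lpow P t) = cnt [x] (lpow Q t) ∧
    cnt [y] (lpow P t) = cnt [y] (lpow Q t) ∧
    cnt [z] (lpow P t) = cnt [z] (lpow Q t) ∧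
    cnt [x, y] (lpow P t) = cnt [x, y] (lpow Q t) ∧
    cnt [y, z] (lpow P t) = cnt [y, z] (lpow Q t) ∧
    cnt [x, y, z] (lpow P t) = cnt [x, y, z] (lpow Q t) := by
  induction t with
  | zero => simp [lpow]
  | succ n ih =>
    obtain ⟨i1, i2, i3, i4, i5, i6⟩ := ih
    rw [lpow_succ, lpow_succ]
    refine ⟨?_, ?_, ?_, ?_, ?_, ?_⟩
    · rw [cnt1_append, cnt1_append, hx, i1]
    · rw [cnt1_append, cnt1_append, hy, i2]
    · rw [cnt1_append, cnt1_append, hz, i3]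
    · rw [cnt2_append, cnt2_append, hxy, i4, hx, i2]
    · rw [cnt2_append, cnt2_append, hyz, i5, hy, i3]
    · rw [cnt3_append, cnt3_append, hxyz, i6, hx, i5, hxy, i3]

theorem power_words_strongME (t : ℕ) (ht : 1 ≤ t) :
    StrongME (lpow [A, B, C, B, A, B, A, C, A, B] t)
             (lpow [B, A, C, A, B, A, B, C, B, A] t) := by
  have main : ∀ x y z : Fin 3,
      cnt [x] [A, B, C, B, A, B, A, C, A, B] = cnt [x] [B, A, C, A, B, A, B, C, B, A] →
      cnt [y] [A, B, C, B, A, B, A, C, A, B] = cnt [y] [B, A, C, A, B, A, B, C, B, A] →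
      cnt [z] [A, B, C, B, A, B, A, C, A, B] = cnt [z] [B, A, C, A, B, A, B, C, B, A] →
      cnt [x,y] [A, B, C, B, A, B, A, C, A, B] = cnt [x,y] [B, A, C, A, B, A, B, C, B, A] →
      cnt [y,z] [A, B, C, B, A, B, A, C, A, B] = cnt [y,z] [B, A, C, A, B, A, B, C, B, A] →
      cnt [x,y,z] [A, B, C, B, A, B, A, C, A, B] = cnt [x,y,z] [B, A, C, A, B, A, B, C, B, A] →
      Mequiv x y z (lpow [A, B, C, B, A, B, A, C, A, B] t)
                   (lpow [B, A, C, A, B, A, B, C, B, A] t) := by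
    intro x y z h1 h2 h3 h4 h5 h6
    obtain ⟨e1, e2, e3, e4, e5, e6⟩ := key_s9 _ _ x y z h1 h2 h3 h4 h5 h6 t
    exact ⟨by rw [lcount_eq_cnt, lcount_eq_cnt, e1],
           by rw [lcount_eq_cnt, lcount_eq_cnt, e2],
           by rw [lcount_eq_cnt, lcount_eq_cnt, e3],
           by rw [lcount_eq_cnt, lcount_eq_cnt, e4],
           by rw [lcount_eq_cnt, lcount_eq_cnt, e5],
           by rw [lcount_eq_cnt, lcount_eq_cnt, e6]⟩
  intro x y z hp
  fin_cases x <;> fin_cases y <;> fin_cases z <;>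
    first
      | exact absurd hp (by decide)
      | exact main _ _ _ (by decide) (by decide) (by decide) (by decide) (by decide) (by decide)
end
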